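/- Let 1/2 < s < 1 and v ∈ ℝ³ with |v| = 1. Then the integral ∫_{ℝ³} |ξ_⊥|² (∫₀¹ dτ / |vτ - ξ|^{s+2})² dξ is finite, where ξ_⊥ = ξ - (ξ·v)v. -/

import Mathlib

open MeasureTheory ENNReal Set Metric

noncomputable section

namespace Stmt18

lemma rpow_anti {a b : ℝ≥0∞} (h : a ≤ b) {β : ℝ} (hβ : 0 ≤ β) : b ^ (-β) ≤ a ^ (-β) := by
  rw [ENNReal.rpow_neg, ENNReal.rpow_neg]
  exact ENNReal.inv_le_inv.mpr (ENNReal.rpow_le_rpow h hβ)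

lemma meas_g1 (β : ℝ) : Measurable (fun u : ℝ => (ENNReal.ofReal |u|) ^ (-β)) := by
  fun_prop

lemma icc_fin (β c : ℝ) (hβ0 : 0 ≤ β) (hβ1 : β < 1) :
    ∫⁻ u in Icc (0:ℝ) c, (ENNReal.ofReal |u|) ^ (-β) < ⊤ := by
  rcases le_or_gt c 0 with hc | hc
  · have h0 : volume (Icc (0:ℝ) c) = 0 := by
      rw [Real.volume_Icc]
      simpa using hc
    rw [setLIntegral_measure_zero _ _ h0]
    exact ENNReal.zero_lt_top
  · have hint : IntegrableOn (fun u : ℝ => u ^ (-β)) (Icc 0 c) := by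
      rw [integrableOn_Icc_iff_integrableOn_Ioc]
      rw [← intervalIntegrable_iff_integrableOn_Ioc_of_le hc.le]
      exact intervalIntegral.intervalIntegrable_rpow' (by linarith)
    have hfin := hint.lintegral_lt_top
    refine lt_of_le_of_lt (le_of_eq ?_) hfin
    refine lintegral_congr_ae ?_
    have h0 : ∀ᵐ u : ℝ ∂(volume.restrict (Icc (0:ℝ) c)), u ≠ 0 := by
      refine ae_restrict_of_ae ?_
      refine ae_iff.mpr ?_
      simp only [ne_eq, not_not]
      have : {u : ℝ | u = 0} = {0} := by ext; simp
      rw [this]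
      exact measure_singleton 0
    filter_upwards [ae_restrict_mem measurableSet_Icc, h0] with u hu hu0
    have hupos : 0 < u := lt_of_le_of_ne hu.1 (Ne.symm hu0)
    rw [abs_of_pos hupos, ENNReal.ofReal_rpow_of_pos hupos]

lemma symm_fin (β c : ℝ) (hβ0 : 0 ≤ β) (hβ1 : β < 1) (hc : 0 ≤ c) :
    ∫⁻ u in Icc (-c) c, (ENNReal.ofReal |u|) ^ (-β) < ⊤ := by
  have hsub : Icc (-c) c ⊆ Icc (-c) 0 ∪ Icc 0 c := by
    intro u hu
    rcases le_total u 0 with h | h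
    · exact Or.inl ⟨hu.1, h⟩
    · exact Or.inr ⟨h, hu.2⟩
  have hneg : ∫⁻ u in Icc (-c) (0:ℝ), (ENNReal.ofReal |u|) ^ (-β)
      = ∫⁻ u in Icc (0:ℝ) c, (ENNReal.ofReal |u|) ^ (-β) := by
    have hpre : Icc (-c) (0:ℝ) = (fun u : ℝ => -u) ⁻¹' (Icc 0 c) := by
      ext u; simp only [mem_preimage, mem_Icc]; constructor <;> intro h <;>
        exact ⟨by linarith [h.1, h.2], by linarith [h.1, h.2]⟩
    rw [hpre]
    have := (Measure.measurePreserving_neg (volume : Measure ℝ)).setLIntegral_comp_preimage_emb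
      (Homeomorph.neg ℝ).measurableEmbedding
      (fun u : ℝ => (ENNReal.ofReal |u|) ^ (-β)) (Icc 0 c)
    simpa [abs_neg] using this
  calc ∫⁻ u in Icc (-c) c, (ENNReal.ofReal |u|) ^ (-β)
      ≤ ∫⁻ u in Icc (-c) 0 ∪ Icc 0 c, (ENNReal.ofReal |u|) ^ (-β) :=
        lintegral_mono_set hsub
    _ ≤ (∫⁻ u in Icc (-c) (0:ℝ), (ENNReal.ofReal |u|) ^ (-β))
        + ∫⁻ u in Icc (0:ℝ) c, (ENNReal.ofReal |u|) ^ (-β) := lintegral_union_le _ _ _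
    _ < ⊤ := by
        rw [hneg]
        exact ENNReal.add_lt_top.mpr ⟨icc_fin β c hβ0 hβ1, icc_fin β c hβ0 hβ1⟩

lemma translate_bound (β t : ℝ) (hβ0 : 0 ≤ β) :
    ∫⁻ τ in Icc (0:ℝ) 1, (ENNReal.ofReal |τ - t|) ^ (-β)
      ≤ (∫⁻ u in Icc (-1:ℝ) 1, (ENNReal.ofReal |u|) ^ (-β)) + 1 := by
  have key : ∫⁻ τ in Icc (0:ℝ) 1, (ENNReal.ofReal |τ - t|) ^ (-β)
      = ∫⁻ u in Icc (-t) (1 - t), (ENNReal.ofReal |u|) ^ (-β) := by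
    have hpre : Icc (0:ℝ) 1 = (fun τ : ℝ => τ - t) ⁻¹' (Icc (-t) (1 - t)) := by
      ext τ; simp only [mem_preimage, mem_Icc]; constructor <;> intro h <;>
        exact ⟨by linarith [h.1, h.2], by linarith [h.1, h.2]⟩
    rw [hpre]
    exact (measurePreserving_sub_right (volume : Measure ℝ) t).setLIntegral_comp_preimage_emb
      (Homeomorph.subRight t).measurableEmbedding
      (fun u : ℝ => (ENNReal.ofReal |u|) ^ (-β)) (Icc (-t) (1 - t))
  rw [key]
  rw [← lintegral_inter_add_diff (fun u => (ENNReal.ofReal |u|) ^ (-β)) (Icc (-t) (1 - t))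
    (measurableSet_Icc (a := (-1:ℝ)) (b := 1))]
  refine add_le_add ?_ ?_
  · exact lintegral_mono_set inter_subset_right
  · calc ∫⁻ u in Icc (-t) (1 - t) \ Icc (-1:ℝ) 1, (ENNReal.ofReal |u|) ^ (-β)
        ≤ ∫⁻ _ in Icc (-t) (1 - t) \ Icc (-1:ℝ) 1, (1 : ℝ≥0∞) := by
          refine setLIntegral_mono measurable_const ?_
          intro u hu
          have h1 : (1:ℝ) ≤ |u| := by
            have hu2 := hu.2
            rw [mem_Icc, not_and_or] at hu2
            rcases hu2 with h | h
            · rw [abs_of_nonpos (by linarith [not_le.mp h])]; linarith [not_le.mp h]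
            · rw [abs_of_pos (by linarith [not_le.mp h])]; linarith [not_le.mp h]
          calc (ENNReal.ofReal |u|) ^ (-β) ≤ (1 : ℝ≥0∞) ^ (-β) :=
                rpow_anti (by simpa using ENNReal.ofReal_le_ofReal h1) hβ0
            _ = 1 := ENNReal.one_rpow _
      _ = volume (Icc (-t) (1 - t) \ Icc (-1:ℝ) 1) := setLIntegral_one _
      _ ≤ volume (Icc (-t) (1 - t)) := measure_mono diff_subset
      _ = 1 := by rw [Real.volume_Icc]; norm_num

lemma translate_fin (β : ℝ) (hβ0 : 0 ≤ β) (hβ1 : β < 1) :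
    (∫⁻ u in Icc (-1:ℝ) 1, (ENNReal.ofReal |u|) ^ (-β)) + 1 < ⊤ := by
  exact ENNReal.add_lt_top.mpr ⟨symm_fin β 1 hβ0 hβ1 zero_le_one, ENNReal.one_lt_top⟩

abbrev E3 := EuclideanSpace ℝ (Fin 3)

def Kc (β : ℝ) : ℝ≥0∞ := (∫⁻ u in Icc (-1:ℝ) 1, (ENNReal.ofReal |u|) ^ (-β)) + 1

lemma Kc_ne_zero (β : ℝ) : Kc β ≠ 0 := by
  simp [Kc]

lemma Kc_lt_top (β : ℝ) (hβ0 : 0 ≤ β) (hβ1 : β < 1) : Kc β < ⊤ :=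
  translate_fin β hβ0 hβ1

lemma decomp (v ξ : E3) (hv : ‖v‖ = 1) (τ : ℝ) :
    ‖τ • v - ξ‖ ^ 2 = (τ - (inner ℝ ξ v : ℝ)) ^ 2 + ‖ξ - (inner ℝ ξ v : ℝ) • v‖ ^ 2 := by
  set t : ℝ := inner ℝ ξ v with ht
  have hw : (inner ℝ v (ξ - t • v) : ℝ) = 0 := by
    rw [inner_sub_right, real_inner_smul_right, real_inner_self_eq_norm_mul_norm, hv,
      real_inner_comm]
    simp [ht]
  have he : τ • v - ξ = (τ - t) • v - (ξ - t • v) := by module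
  rw [he, norm_sub_sq_real, real_inner_smul_left, hw, norm_smul, hv]
  simp [mul_pow, sq_abs]

lemma perp_le (v ξ : E3) (hv : ‖v‖ = 1) (τ : ℝ) :
    ‖ξ - (inner ℝ ξ v : ℝ) • v‖ ≤ ‖τ • v - ξ‖ := by
  have h := decomp v ξ hv τ
  have h2 : ‖ξ - (inner ℝ ξ v : ℝ) • v‖ ^ 2 ≤ ‖τ • v - ξ‖ ^ 2 := by nlinarith [sq_nonneg (τ - (inner ℝ ξ v : ℝ))]
  calc ‖ξ - (inner ℝ ξ v : ℝ) • v‖ = Real.sqrt (‖ξ - (inner ℝ ξ v : ℝ) • v‖ ^ 2) :=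
        (Real.sqrt_sq (norm_nonneg _)).symm
    _ ≤ Real.sqrt (‖τ • v - ξ‖ ^ 2) := Real.sqrt_le_sqrt h2
    _ = ‖τ • v - ξ‖ := Real.sqrt_sq (norm_nonneg _)

lemma tau_le (v ξ : E3) (hv : ‖v‖ = 1) (τ : ℝ) :
    |τ - (inner ℝ ξ v : ℝ)| ≤ ‖τ • v - ξ‖ := by
  have h := decomp v ξ hv τ
  have h2 : |τ - (inner ℝ ξ v : ℝ)| ^ 2 ≤ ‖τ • v - ξ‖ ^ 2 := by
    rw [sq_abs]; nlinarith [sq_nonneg ‖ξ - (inner ℝ ξ v : ℝ) • v‖]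
  calc |τ - (inner ℝ ξ v : ℝ)| = Real.sqrt (|τ - (inner ℝ ξ v : ℝ)| ^ 2) :=
        (Real.sqrt_sq (abs_nonneg _)).symm
    _ ≤ Real.sqrt (‖τ • v - ξ‖ ^ 2) := Real.sqrt_le_sqrt h2
    _ = ‖τ • v - ξ‖ := Real.sqrt_sq (norm_nonneg _)

lemma stepA (s : ℝ) (hs : 0 ≤ s) (v ξ : E3) (hv : ‖v‖ = 1) :
    ENNReal.ofReal (‖ξ - (inner ℝ ξ v : ℝ) • v‖ ^ 2) *
      (∫⁻ τ in Icc (0:ℝ) 1, ENNReal.ofReal ‖τ • v - ξ‖ ^ (-(s + 2))) ^ 2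
      ≤ (∫⁻ τ in Icc (0:ℝ) 1, ENNReal.ofReal ‖τ • v - ξ‖ ^ (-(s + 1))) ^ 2 := by
  have h1 : ENNReal.ofReal (‖ξ - (inner ℝ ξ v : ℝ) • v‖ ^ 2)
      = (ENNReal.ofReal ‖ξ - (inner ℝ ξ v : ℝ) • v‖) ^ 2 :=
    ENNReal.ofReal_pow (norm_nonneg _) 2
  rw [h1, ← mul_pow]
  have key : ENNReal.ofReal ‖ξ - (inner ℝ ξ v : ℝ) • v‖ *
      ∫⁻ τ in Icc (0:ℝ) 1, ENNReal.ofReal ‖τ • v - ξ‖ ^ (-(s + 2))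
      ≤ ∫⁻ τ in Icc (0:ℝ) 1, ENNReal.ofReal ‖τ • v - ξ‖ ^ (-(s + 1)) := by
    rw [← lintegral_const_mul' _ _ ENNReal.ofReal_ne_top]
    refine lintegral_mono fun τ => ?_
    have hrb : ENNReal.ofReal ‖ξ - (inner ℝ ξ v : ℝ) • v‖ ≤ ENNReal.ofReal ‖τ • v - ξ‖ :=
      ENNReal.ofReal_le_ofReal (perp_le v ξ hv τ)
    rcases eq_or_ne (ENNReal.ofReal ‖τ • v - ξ‖) 0 with h0 | h0
    · rw [h0] at hrb ⊢
      rw [le_zero_iff.mp hrb, zero_mul]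
      exact zero_le
    · have hsplit : ENNReal.ofReal ‖τ • v - ξ‖ ^ (-(s+1))
          = ENNReal.ofReal ‖τ • v - ξ‖ * ENNReal.ofReal ‖τ • v - ξ‖ ^ (-(s+2)) := by
        have h := ENNReal.rpow_add 1 (-(s+2)) h0 ENNReal.ofReal_ne_top
        rw [show (1 + -(s+2)) = -(s+1) by ring] at h
        rw [h, ENNReal.rpow_one]
      rw [hsplit]
      exact mul_le_mul_left hrb _
  calc (ENNReal.ofReal ‖ξ - (inner ℝ ξ v : ℝ) • v‖ *
      ∫⁻ τ in Icc (0:ℝ) 1, ENNReal.ofReal ‖τ • v - ξ‖ ^ (-(s + 2))) ^ 2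
      ≤ (∫⁻ τ in Icc (0:ℝ) 1, ENNReal.ofReal ‖τ • v - ξ‖ ^ (-(s + 1))) ^ 2 := by
        rw [pow_two, pow_two]; exact mul_le_mul' key key

lemma stepNear (s : ℝ) (hs : 0 ≤ s) (v ξ : E3) (hv : ‖v‖ = 1) :
    (∫⁻ τ in Icc (0:ℝ) 1, ENNReal.ofReal ‖τ • v - ξ‖ ^ (-(s + 1)))
      ≤ (ENNReal.ofReal ‖ξ - (inner ℝ ξ v : ℝ) • v‖) ^ (-((s+1)/2)) * Kc ((s+1)/2) := by
  set β := (s+1)/2 with hβ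
  have hβ0 : 0 ≤ β := by positivity
  set R := ENNReal.ofReal ‖ξ - (inner ℝ ξ v : ℝ) • v‖ with hR
  set t : ℝ := inner ℝ ξ v with htdef
  have hptwise : ∀ τ : ℝ, ENNReal.ofReal ‖τ • v - ξ‖ ^ (-(s + 1))
      ≤ R ^ (-β) * (ENNReal.ofReal |τ - t|) ^ (-β) := by
    intro τ
    have h1 : R ≤ ENNReal.ofReal ‖τ • v - ξ‖ := ENNReal.ofReal_le_ofReal (perp_le v ξ hv τ)
    have h2 : ENNReal.ofReal |τ - t| ≤ ENNReal.ofReal ‖τ • v - ξ‖ :=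
      ENNReal.ofReal_le_ofReal (tau_le v ξ hv τ)
    rcases eq_or_ne (ENNReal.ofReal ‖τ • v - ξ‖) 0 with h0 | h0
    · rw [h0] at h1 h2 ⊢
      rw [le_zero_iff.mp h1, le_zero_iff.mp h2]
      rw [ENNReal.zero_rpow_of_neg (by linarith : -(s+1) < 0),
        ENNReal.zero_rpow_of_neg (by simp [hβ]; linarith : -β < 0)]
      simp
    · have hsplit : ENNReal.ofReal ‖τ • v - ξ‖ ^ (-(s+1))
          = ENNReal.ofReal ‖τ • v - ξ‖ ^ (-β) * ENNReal.ofReal ‖τ • v - ξ‖ ^ (-β) := by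
        rw [← ENNReal.rpow_add _ _ h0 ENNReal.ofReal_ne_top]
        congr 1
        rw [hβ]; ring
      rw [hsplit]
      exact mul_le_mul' (rpow_anti h1 hβ0) (rpow_anti h2 hβ0)
  rcases eq_or_ne R 0 with hR0 | hR0
  · rw [hR0, ENNReal.zero_rpow_of_neg (by simp [hβ]; linarith : -β < 0),
      ENNReal.top_mul (Kc_ne_zero β)]
    exact le_top
  · calc (∫⁻ τ in Icc (0:ℝ) 1, ENNReal.ofReal ‖τ • v - ξ‖ ^ (-(s + 1)))
        ≤ ∫⁻ τ in Icc (0:ℝ) 1, R ^ (-β) * (ENNReal.ofReal |τ - t|) ^ (-β) :=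
          lintegral_mono fun τ => hptwise τ
      _ = R ^ (-β) * ∫⁻ τ in Icc (0:ℝ) 1, (ENNReal.ofReal |τ - t|) ^ (-β) :=
          lintegral_const_mul' _ _ (by
            rw [ENNReal.rpow_neg, ne_eq, ENNReal.inv_eq_top]
            intro h
            rcases ENNReal.rpow_eq_zero_iff.mp h with ⟨h1, _⟩ | ⟨h1, _⟩
            · exact hR0 h1
            · exact ENNReal.ofReal_ne_top h1)
      _ ≤ R ^ (-β) * Kc β := mul_le_mul_right (translate_bound β t hβ0) _

lemma stepFar (s : ℝ) (hs : 0 ≤ s) (v ξ : E3) (hv : ‖v‖ = 1) (hξ : 2 ≤ ‖ξ‖) :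
    (∫⁻ τ in Icc (0:ℝ) 1, ENNReal.ofReal ‖τ • v - ξ‖ ^ (-(s + 1)))
      ≤ (ENNReal.ofReal (‖ξ‖/2)) ^ (-(s+1)) := by
  have hbd : ∀ τ ∈ Icc (0:ℝ) 1, ENNReal.ofReal ‖τ • v - ξ‖ ^ (-(s + 1))
      ≤ (ENNReal.ofReal (‖ξ‖/2)) ^ (-(s+1)) := by
    intro τ hτ
    have hτv : ‖τ • v‖ ≤ 1 := by
      rw [norm_smul, hv, mul_one, Real.norm_eq_abs, abs_of_nonneg hτ.1]
      exact hτ.2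
    have hlow : ‖ξ‖/2 ≤ ‖τ • v - ξ‖ := by
      have h1 : ‖ξ‖ - ‖τ • v‖ ≤ ‖ξ - τ • v‖ := norm_sub_norm_le _ _
      rw [norm_sub_rev] at h1
      linarith
    exact rpow_anti (ENNReal.ofReal_le_ofReal hlow) (by linarith)
  calc (∫⁻ τ in Icc (0:ℝ) 1, ENNReal.ofReal ‖τ • v - ξ‖ ^ (-(s + 1)))
      ≤ ∫⁻ _ in Icc (0:ℝ) 1, (ENNReal.ofReal (‖ξ‖/2)) ^ (-(s+1)) :=
        setLIntegral_mono measurable_const hbd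
    _ = (ENNReal.ofReal (‖ξ‖/2)) ^ (-(s+1)) * volume (Icc (0:ℝ) 1) := setLIntegral_const _ _
    _ = (ENNReal.ofReal (‖ξ‖/2)) ^ (-(s+1)) := by rw [Real.volume_Icc]; norm_num

lemma coord_le (x : E3) (i : Fin 3) : |x i| ≤ ‖x‖ := by
  rw [EuclideanSpace.norm_eq]
  have h1 : ‖x i‖^2 ≤ ∑ j, ‖x j‖^2 :=
    Finset.single_le_sum (f := fun j => ‖x j‖^2) (fun j _ => sq_nonneg _) (Finset.mem_univ i)
  calc |x i| = Real.sqrt (‖x i‖^2) := by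
        rw [Real.sqrt_sq (norm_nonneg _)]; exact (Real.norm_eq_abs _).symm
    _ ≤ Real.sqrt (∑ j, ‖x j‖^2) := Real.sqrt_le_sqrt h1

def g1 (β : ℝ) : ℝ → ℝ≥0∞ := (Icc (-2:ℝ) 2).indicator (fun u => (ENNReal.ofReal |u|) ^ (-β))

lemma g1_meas (β : ℝ) : Measurable (g1 β) := (meas_g1 β).indicator measurableSet_Icc

lemma g1_fin (β : ℝ) (hβ0 : 0 ≤ β) (hβ1 : β < 1) : ∫⁻ u : ℝ, g1 β u < ⊤ := by
  rw [g1, lintegral_indicator measurableSet_Icc]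
  exact symm_fin β 2 hβ0 hβ1 (by norm_num)

def g0 : ℝ → ℝ≥0∞ := (Icc (-2:ℝ) 2).indicator (fun _ => (1:ℝ≥0∞))

lemma g0_meas : Measurable g0 := measurable_const.indicator measurableSet_Icc

lemma g0_fin : ∫⁻ u : ℝ, g0 u < ⊤ := by
  rw [g0, lintegral_indicator measurableSet_Icc, setLIntegral_one, Real.volume_Icc]
  exact ENNReal.ofReal_lt_top

lemma prod_fin (β : ℝ) (hβ0 : 0 ≤ β) (hβ1 : β < 1) :
    ∫⁻ x : E3, g0 (x 0) * (g1 β (x 1) * g1 β (x 2)) < ⊤ := by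
  have hpi : ∫⁻ x : E3, g0 (x 0) * (g1 β (x 1) * g1 β (x 2))
      = ∫⁻ y : Fin 3 → ℝ, g0 (y 0) * (g1 β (y 1) * g1 β (y 2)) := by
    exact ((EuclideanSpace.volume_preserving_symm_measurableEquiv_toLp (Fin 3)).lintegral_comp_emb
      (MeasurableEquiv.measurableEmbedding _)
      (fun y : Fin 3 → ℝ => g0 (y 0) * (g1 β (y 1) * g1 β (y 2))))
  rw [hpi]
  have h2 : ∫⁻ y : Fin 3 → ℝ, g0 (y 0) * (g1 β (y 1) * g1 β (y 2))
      = ∫⁻ z : ℝ × (Fin 2 → ℝ), g0 z.1 * (g1 β (z.2 0) * g1 β (z.2 1)) := by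
    exact (volume_preserving_piFinSuccAbove (fun _ : Fin 3 => ℝ) 0).lintegral_comp_emb
      (MeasurableEquiv.measurableEmbedding _)
      (fun z : ℝ × (Fin 2 → ℝ) => g0 z.1 * (g1 β (z.2 0) * g1 β (z.2 1)))
  rw [h2]
  have h3 : ∫⁻ z : ℝ × (Fin 2 → ℝ), g0 z.1 * (g1 β (z.2 0) * g1 β (z.2 1))
      = (∫⁻ u : ℝ, g0 u) * ∫⁻ w : Fin 2 → ℝ, g1 β (w 0) * g1 β (w 1) := by
    have hm : Measurable fun w : Fin 2 → ℝ => g1 β (w 0) * g1 β (w 1) :=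
      ((g1_meas β).comp (measurable_pi_apply 0)).mul ((g1_meas β).comp (measurable_pi_apply 1))
    exact lintegral_prod_mul g0_meas.aemeasurable hm.aemeasurable
  rw [h3]
  have h4 : ∫⁻ w : Fin 2 → ℝ, g1 β (w 0) * g1 β (w 1)
      = ∫⁻ z : ℝ × (Fin 1 → ℝ), g1 β z.1 * g1 β (z.2 0) := by
    exact (volume_preserving_piFinSuccAbove (fun _ : Fin 2 => ℝ) 0).lintegral_comp_emb
      (MeasurableEquiv.measurableEmbedding _)
      (fun z : ℝ × (Fin 1 → ℝ) => g1 β z.1 * g1 β (z.2 0))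
  have h5 : ∫⁻ z : ℝ × (Fin 1 → ℝ), g1 β z.1 * g1 β (z.2 0)
      = (∫⁻ u : ℝ, g1 β u) * ∫⁻ w : Fin 1 → ℝ, g1 β (w 0) := by
    have hm : Measurable fun w : Fin 1 → ℝ => g1 β (w 0) :=
      (g1_meas β).comp (measurable_pi_apply 0)
    exact lintegral_prod_mul (g1_meas β).aemeasurable hm.aemeasurable
  have h6 : ∫⁻ w : Fin 1 → ℝ, g1 β (w 0) = ∫⁻ u : ℝ, g1 β u := by
    exact (volume_preserving_funUnique (Fin 1) ℝ).lintegral_comp_emb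
      (MeasurableEquiv.measurableEmbedding _) (g1 β)
  rw [h4, h5, h6]
  exact ENNReal.mul_lt_top g0_fin (ENNReal.mul_lt_top (g1_fin β hβ0 hβ1) (g1_fin β hβ0 hβ1))

lemma nearFin (s : ℝ) (hs0 : 0 ≤ s) (hs1 : s < 1) (v : E3) (hv : ‖v‖ = 1) :
    ∫⁻ ξ : E3 in closedBall (0:E3) 2,
      (ENNReal.ofReal ‖ξ - (inner ℝ ξ v : ℝ) • v‖) ^ (-(s+1)) < ⊤ := by
  set β := (s+1)/2 with hβ
  have hβ0 : 0 ≤ β := by positivity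
  have hβ1 : β < 1 := by rw [hβ]; linarith
  obtain ⟨b, hb⟩ : ∃ b : OrthonormalBasis (Fin 3) ℝ E3, b 0 = v := by
    have hcard : Module.finrank ℝ E3 = Fintype.card (Fin 3) := by
      simp [finrank_euclideanSpace_fin]
    have hortho : Orthonormal ℝ (({0} : Set (Fin 3)).restrict (fun _ : Fin 3 => v)) := by
      rw [orthonormal_iff_ite]
      intro i j
      have hij : i = j := by
        apply Subtype.ext
        have h1 : (i : Fin 3) ∈ ({0} : Set (Fin 3)) := i.2
        have h2 : (j : Fin 3) ∈ ({0} : Set (Fin 3)) := j.2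
        rw [mem_singleton_iff] at h1 h2
        rw [h1, h2]
      simp only [hij, if_pos rfl, restrict_apply]
      rw [real_inner_self_eq_norm_mul_norm]
      change ‖v‖ * ‖v‖ = _
      rw [hv]
      norm_num
    obtain ⟨b, hb⟩ := hortho.exists_orthonormalBasis_extension_of_card_eq hcard
    exact ⟨b, hb 0 rfl⟩
  set f : E3 → ℝ≥0∞ :=
    fun ξ => (ENNReal.ofReal ‖ξ - (inner ℝ ξ v : ℝ) • v‖) ^ (-(s+1)) with hf
  rw [← lintegral_indicator measurableSet_closedBall]
  rw [← b.measurePreserving_repr_symm.lintegral_comp_emb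
    (b.repr.symm.toHomeomorph.measurableEmbedding)
    ((closedBall (0:E3) 2).indicator f)]
  have hbound : ∀ x : EuclideanSpace ℝ (Fin 3),
      (closedBall (0:E3) 2).indicator f (b.repr.symm x)
        ≤ g0 (x 0) * (g1 β (x 1) * g1 β (x 2)) := by
    intro x
    by_cases hxB : b.repr.symm x ∈ closedBall (0:E3) 2
    · rw [indicator_of_mem hxB]
      set ξ := b.repr.symm x with hξ
      have hx : b.repr ξ = x := b.repr.apply_symm_apply x
      have hnorm : ‖x‖ ≤ 2 := by
        have h1 := mem_closedBall_zero_iff.mp hxB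
        rwa [← b.repr.norm_map ξ, hx] at h1
      have hcoord : ∀ i : Fin 3, x i ∈ Icc (-2:ℝ) 2 := by
        intro i
        have := (coord_le x i).trans hnorm
        rw [abs_le] at this
        exact ⟨this.1, this.2⟩
      have ht : (inner ℝ ξ v : ℝ) = x 0 := by
        rw [real_inner_comm, ← hb, ← OrthonormalBasis.repr_apply_apply, hx]
      have hperpcoord : b.repr (ξ - (x 0) • v) = x - (x 0) • EuclideanSpace.single 0 (1:ℝ) := by
        rw [map_sub, b.repr.map_smul, hx, ← hb, b.repr_self]
      have hnormperp : ‖ξ - (inner ℝ ξ v : ℝ) • v‖ = Real.sqrt ((x 1)^2 + (x 2)^2) := by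
        rw [ht, ← b.repr.norm_map (ξ - (x 0) • v), hperpcoord, EuclideanSpace.norm_eq,
          Fin.sum_univ_three]
        simp [EuclideanSpace.single_apply, sq_abs]
      rw [hf]
      simp only
      rw [hnormperp]
      have hsqle : Real.sqrt |x 1| * Real.sqrt |x 2| ≤ Real.sqrt ((x 1)^2 + (x 2)^2) := by
        rw [← Real.sqrt_mul (abs_nonneg _)]
        refine Real.sqrt_le_sqrt ?_
        nlinarith [sq_abs (x 1), sq_abs (x 2), sq_nonneg (|x 1| - |x 2|), abs_nonneg (x 1),
          abs_nonneg (x 2), mul_nonneg (abs_nonneg (x 1)) (abs_nonneg (x 2))]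
      have hfactor : ∀ u : ℝ, (ENNReal.ofReal (Real.sqrt |u|)) ^ (-(s+1))
          = (ENNReal.ofReal |u|) ^ (-β) := by
        intro u
        rw [Real.sqrt_eq_rpow, ← ENNReal.ofReal_rpow_of_nonneg (abs_nonneg u) (by norm_num),
          ← ENNReal.rpow_mul]
        congr 1
        rw [hβ]; ring
      calc (ENNReal.ofReal (Real.sqrt ((x 1)^2 + (x 2)^2))) ^ (-(s+1))
          ≤ (ENNReal.ofReal (Real.sqrt |x 1| * Real.sqrt |x 2|)) ^ (-(s+1)) :=
            rpow_anti (ENNReal.ofReal_le_ofReal hsqle) (by linarith)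
        _ = (ENNReal.ofReal (Real.sqrt |x 1|) * ENNReal.ofReal (Real.sqrt |x 2|)) ^ (-(s+1)) := by
            rw [ENNReal.ofReal_mul (Real.sqrt_nonneg _)]
        _ = (ENNReal.ofReal (Real.sqrt |x 1|)) ^ (-(s+1))
              * (ENNReal.ofReal (Real.sqrt |x 2|)) ^ (-(s+1)) :=
            ENNReal.mul_rpow_of_ne_top ENNReal.ofReal_ne_top ENNReal.ofReal_ne_top _
        _ = (ENNReal.ofReal |x 1|) ^ (-β) * (ENNReal.ofReal |x 2|) ^ (-β) := by
            rw [hfactor, hfactor]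
        _ ≤ g0 (x 0) * (g1 β (x 1) * g1 β (x 2)) := by
            rw [g0, g1, indicator_of_mem (hcoord 0), indicator_of_mem (hcoord 1),
              indicator_of_mem (hcoord 2), one_mul]
    · rw [indicator_of_notMem hxB]
      exact zero_le
  calc ∫⁻ x, (closedBall (0:E3) 2).indicator f (b.repr.symm x)
      ≤ ∫⁻ x : E3, g0 (x 0) * (g1 β (x 1) * g1 β (x 2)) := lintegral_mono hbound
    _ < ⊤ := prod_fin β hβ0 hβ1

lemma farFin (p : ℝ) (hp : 3 < p) :
    ∫⁻ ξ : E3 in (closedBall (0:E3) 2)ᶜ, (ENNReal.ofReal (‖ξ‖/2)) ^ (-p) < ⊤ := by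
  have hp0 : 0 ≤ p := by linarith
  have hbound : ∀ ξ : E3, ξ ∈ (closedBall (0:E3) 2)ᶜ →
      (ENNReal.ofReal (‖ξ‖/2)) ^ (-p)
        ≤ ENNReal.ofReal ((3:ℝ)^p) * ENNReal.ofReal ((1+‖ξ‖)^(-p)) := by
    intro ξ hξ
    have h2 : 2 ≤ ‖ξ‖ := by
      rw [mem_compl_iff, mem_closedBall_zero_iff, not_le] at hξ
      exact hξ.le
    have h1 : (1+‖ξ‖)/3 ≤ ‖ξ‖/2 := by linarith
    have hpos : 0 < (1+‖ξ‖)/3 := by positivity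
    calc (ENNReal.ofReal (‖ξ‖/2)) ^ (-p) ≤ (ENNReal.ofReal ((1+‖ξ‖)/3)) ^ (-p) :=
          rpow_anti (ENNReal.ofReal_le_ofReal h1) hp0
      _ = ENNReal.ofReal (((1+‖ξ‖)/3) ^ (-p)) := ENNReal.ofReal_rpow_of_pos hpos
      _ = ENNReal.ofReal ((3:ℝ)^p * (1+‖ξ‖)^(-p)) := by
          congr 1
          rw [Real.div_rpow (by positivity) (by norm_num : (0:ℝ) ≤ 3),
            Real.rpow_neg (by norm_num : (0:ℝ) ≤ 3), div_inv_eq_mul]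
          ring
      _ = ENNReal.ofReal ((3:ℝ)^p) * ENNReal.ofReal ((1+‖ξ‖)^(-p)) :=
          ENNReal.ofReal_mul (by positivity)
  calc ∫⁻ ξ : E3 in (closedBall (0:E3) 2)ᶜ, (ENNReal.ofReal (‖ξ‖/2)) ^ (-p)
      ≤ ∫⁻ ξ : E3 in (closedBall (0:E3) 2)ᶜ,
          ENNReal.ofReal ((3:ℝ)^p) * ENNReal.ofReal ((1+‖ξ‖)^(-p)) := by
        refine setLIntegral_mono' measurableSet_closedBall.compl hbound
    _ ≤ ∫⁻ ξ : E3, ENNReal.ofReal ((3:ℝ)^p) * ENNReal.ofReal ((1+‖ξ‖)^(-p)) :=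
        setLIntegral_le_lintegral _ _
    _ = ENNReal.ofReal ((3:ℝ)^p) * ∫⁻ ξ : E3, ENNReal.ofReal ((1+‖ξ‖)^(-p)) :=
        lintegral_const_mul' _ _ ENNReal.ofReal_ne_top
    _ < ⊤ := by
        refine ENNReal.mul_lt_top ENNReal.ofReal_lt_top ?_
        refine finite_integral_one_add_norm ?_
        rw [finrank_euclideanSpace_fin]
        exact_mod_cast hp

end Stmt18

open Stmt18 in
theorem stmt_18 (s : ℝ) (hs1 : 1/2 < s) (hs2 : s < 1)
    (v : EuclideanSpace ℝ (Fin 3)) (hv : ‖v‖ = 1) :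
    (∫⁻ ξ : EuclideanSpace ℝ (Fin 3),
        ENNReal.ofReal (‖ξ - (inner ℝ ξ v : ℝ) • v‖ ^ 2) *
          (∫⁻ τ in Set.Icc (0:ℝ) 1, ENNReal.ofReal ‖τ • v - ξ‖ ^ (-(s + 2))) ^ 2)
      < ⊤ := by
  have hs0 : 0 ≤ s := by linarith
  set β := (s+1)/2 with hβ
  have hβ0 : 0 ≤ β := by positivity
  have hβ1 : β < 1 := by rw [hβ]; linarith
  set F : E3 → ℝ≥0∞ := fun ξ =>
    ENNReal.ofReal (‖ξ - (inner ℝ ξ v : ℝ) • v‖ ^ 2) *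
      (∫⁻ τ in Set.Icc (0:ℝ) 1, ENNReal.ofReal ‖τ • v - ξ‖ ^ (-(s + 2))) ^ 2 with hF
  show (∫⁻ ξ : E3, F ξ) < ⊤
  rw [← lintegral_add_compl F (measurableSet_closedBall (x := (0:E3)) (ε := 2))]
  refine ENNReal.add_lt_top.mpr ⟨?_, ?_⟩
  · calc ∫⁻ ξ : E3 in closedBall (0:E3) 2, F ξ
        ≤ ∫⁻ ξ : E3 in closedBall (0:E3) 2,
            (Kc β)^2 * (ENNReal.ofReal ‖ξ - (inner ℝ ξ v : ℝ) • v‖) ^ (-(s+1)) := by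
          refine setLIntegral_mono' measurableSet_closedBall fun ξ _ => ?_
          calc F ξ ≤ (∫⁻ τ in Set.Icc (0:ℝ) 1, ENNReal.ofReal ‖τ • v - ξ‖ ^ (-(s + 1)))^2 :=
                stepA s hs0 v ξ hv
            _ ≤ ((ENNReal.ofReal ‖ξ - (inner ℝ ξ v : ℝ) • v‖) ^ (-β) * Kc β)^2 := by
                rw [pow_two, pow_two]
                exact mul_le_mul' (stepNear s hs0 v ξ hv) (stepNear s hs0 v ξ hv)
            _ = (Kc β)^2 * ((ENNReal.ofReal ‖ξ - (inner ℝ ξ v : ℝ) • v‖) ^ (-β))^2 := by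
                rw [mul_pow]; ring
            _ = (Kc β)^2 * (ENNReal.ofReal ‖ξ - (inner ℝ ξ v : ℝ) • v‖) ^ (-(s+1)) := by
                congr 1
                rw [← ENNReal.rpow_natCast ((ENNReal.ofReal ‖ξ - (inner ℝ ξ v : ℝ) • v‖) ^ (-β)) 2,
                  ← ENNReal.rpow_mul]
                congr 1
                rw [hβ]; push_cast; ring
      _ = (Kc β)^2 * ∫⁻ ξ : E3 in closedBall (0:E3) 2,
            (ENNReal.ofReal ‖ξ - (inner ℝ ξ v : ℝ) • v‖) ^ (-(s+1)) :=
          lintegral_const_mul' _ _ (ENNReal.pow_ne_top (Kc_lt_top β hβ0 hβ1).ne)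
      _ < ⊤ := ENNReal.mul_lt_top
          (ENNReal.pow_lt_top (Kc_lt_top β hβ0 hβ1)) (nearFin s hs0 hs2 v hv)
  · calc ∫⁻ ξ : E3 in (closedBall (0:E3) 2)ᶜ, F ξ
        ≤ ∫⁻ ξ : E3 in (closedBall (0:E3) 2)ᶜ, (ENNReal.ofReal (‖ξ‖/2)) ^ (-(2*(s+1))) := by
          refine setLIntegral_mono' measurableSet_closedBall.compl fun ξ hξ => ?_
          have h2 : 2 ≤ ‖ξ‖ := by
            rw [mem_compl_iff, mem_closedBall_zero_iff, not_le] at hξ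
            exact hξ.le
          calc F ξ ≤ (∫⁻ τ in Set.Icc (0:ℝ) 1, ENNReal.ofReal ‖τ • v - ξ‖ ^ (-(s + 1)))^2 :=
                stepA s hs0 v ξ hv
            _ ≤ ((ENNReal.ofReal (‖ξ‖/2)) ^ (-(s+1)))^2 := by
                rw [pow_two, pow_two]
                exact mul_le_mul' (stepFar s hs0 v ξ hv h2) (stepFar s hs0 v ξ hv h2)
            _ = (ENNReal.ofReal (‖ξ‖/2)) ^ (-(2*(s+1))) := by
                rw [← ENNReal.rpow_natCast ((ENNReal.ofReal (‖ξ‖/2)) ^ (-(s+1))) 2,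
                  ← ENNReal.rpow_mul]
                congr 1
                push_cast; ring
      _ < ⊤ := farFin (2*(s+1)) (by linarith)
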